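/- Let L = k[X₁^{±1}, …, X_n^{±1}] be the ring of Laurent polynomials in n variables over a field k of characteristic zero, let g be a G-grading of L where G is a totally ordered abelian group, and let deg_g : L → G ∪ {−∞} be the degree function determined by g. Let B be any ring with k[X₁, …, X_n] ⊆ B ⊆ L, and let deg : B → G ∪ {−∞} be the restriction of deg_g. Then deg is tame over k. Moreover, if each Xᵢ is a g-homogeneous element of L, then for every k-derivation D : B → B, deg(D) is defined and deg(D) = max{δ_D(X₁), …, δ_D(X_n)}. -/

import Mathlib

section DegreePrelude

variable {B : Type*} [CommRing B] {G : Type*} [AddCommGroup G] [LinearOrder G] [IsOrderedAddMonoid G]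

/-- A degree function on `B` with values in `G ∪ {-∞}` -/
def IsDegreeFunction (deg : B → WithBot G) : Prop :=
  (∀ x : B, deg x = ⊥ ↔ x = 0) ∧
  (∀ x y : B, deg (x * y) = deg x + deg y) ∧
  (∀ x y : B, deg (x + y) ≤ max (deg x) (deg y))

/-- `degDelta deg D x = deg (D x) - deg x` (with value `-∞` if `D x = 0`). -/
noncomputable def degDelta (deg : B → WithBot G) (D : B → B) (x : B) : WithBot G :=
  (deg (D x)).map fun a => a - (deg x).unbotD 0

/-- The set `{deg (D x) - deg x : x ∈ B \ {0}}`. -/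
def degDeltaSet (deg : B → WithBot G) (D : B → B) : Set (WithBot G) :=
  {m | ∃ x : B, x ≠ 0 ∧ degDelta deg D x = m}

/-- `deg (D)` is defined, i.e. the set `{deg (D x) - deg x : x ≠ 0}` has a
greatest element in `G ∪ {-∞}`. -/
def DegreeDefinedAt (deg : B → WithBot G) (D : B → B) : Prop :=
  ∃ M, IsGreatest (degDeltaSet deg D) M

end DegreePrelude


open AddMonoidAlgebra in
theorem st_map_sub_le_iff {G : Type*} [AddCommGroup G] [LinearOrder G] [IsOrderedAddMonoid G] (p q : WithBot G) (d : G) :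
    (p.map fun a => a - d) ≤ q ↔ p ≤ q + ↑d := by
  cases p with
  | bot => simp
  | coe c =>
    rw [WithBot.map_coe]
    cases q with
    | bot =>
      rw [WithBot.bot_add]
      exact iff_of_false (WithBot.not_coe_le_bot _) (WithBot.not_coe_le_bot _)
    | coe m => rw [← WithBot.coe_add, WithBot.coe_le_coe, WithBot.coe_le_coe, sub_le_iff_le_add]


section StAux
open AddMonoidAlgebra
variable {k G : Type*} [Field k] [AddCommGroup G] [LinearOrder G] [IsOrderedAddMonoid G] [DecidableEq G] {n : ℕ}
variable (𝒜 : G → AddSubgroup (AddMonoidAlgebra k (Fin n →₀ ℤ))) [GradedRing 𝒜]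

theorem st_unit_homog {u v : AddMonoidAlgebra k (Fin n →₀ ℤ)} (huv : u * v = 1) :
    ∃ d : G, u ∈ 𝒜 d := by
  classical
  have hu : u ≠ 0 := by rintro rfl; rw [zero_mul] at huv; exact one_ne_zero huv.symm
  have hv : v ≠ 0 := by rintro rfl; rw [mul_zero] at huv; exact one_ne_zero huv.symm
  set U := DirectSum.decompose 𝒜 u with hUdef
  set V := DirectSum.decompose 𝒜 v with hVdef
  have hUne : U.support.Nonempty := by
    rw [Finset.nonempty_iff_ne_empty]
    intro h
    have hU0 : U = 0 := DFinsupp.support_eq_empty.mp h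
    exact hu ((DirectSum.decompose 𝒜).injective (by rw [← hUdef, hU0, DirectSum.decompose_zero]))
  have hVne : V.support.Nonempty := by
    rw [Finset.nonempty_iff_ne_empty]
    intro h
    have hV0 : V = 0 := DFinsupp.support_eq_empty.mp h
    exact hv ((DirectSum.decompose 𝒜).injective (by rw [← hVdef, hV0, DirectSum.decompose_zero]))
  have key : ∀ s ∈ U.support, ∀ t ∈ V.support,
      (∀ i ∈ U.support, ∀ j ∈ V.support, i + j = s + t → i = s ∧ j = t) → s + t = 0 := by
    intro s hs t ht huniq
    have hcomp : (((U * V) (s + t) : 𝒜 (s+t)) : AddMonoidAlgebra k (Fin n →₀ ℤ))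
        = ((U s : 𝒜 s) : AddMonoidAlgebra k (Fin n →₀ ℤ)) * ((V t : 𝒜 t) : AddMonoidAlgebra k (Fin n →₀ ℤ)) := by
      rw [DirectSum.coe_mul_apply]
      rw [Finset.sum_eq_single (s, t)]
      · intro b hb hbne
        exfalso
        rw [Finset.mem_filter, Finset.mem_product] at hb
        obtain ⟨hij, jsum⟩ := huniq b.1 hb.1.1 b.2 hb.1.2 hb.2
        exact hbne (Prod.ext hij jsum)
      · intro h
        exfalso
        exact h (Finset.mem_filter.mpr ⟨Finset.mem_product.mpr ⟨hs, ht⟩, rfl⟩)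
    have hne : (((U s : 𝒜 s) : AddMonoidAlgebra k (Fin n →₀ ℤ)) *
        ((V t : 𝒜 t) : AddMonoidAlgebra k (Fin n →₀ ℤ))) ≠ 0 := by
      apply mul_ne_zero
      · exact fun h => DFinsupp.mem_support_iff.mp hs (by exact_mod_cast (ZeroMemClass.coe_eq_zero).mp h)
      · exact fun h => DFinsupp.mem_support_iff.mp ht (by exact_mod_cast (ZeroMemClass.coe_eq_zero).mp h)
    by_contra hst
    have hUV : U * V = DirectSum.decompose 𝒜 ((⟨1, SetLike.one_mem_graded 𝒜⟩ : 𝒜 0) : AddMonoidAlgebra k (Fin n →₀ ℤ)) := by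
      rw [hUdef, hVdef, ← DirectSum.decompose_mul, huv]
    rw [hUV, DirectSum.decompose_coe, DirectSum.of_eq_of_ne _ _ _ hst] at hcomp
    exact hne (by rw [← hcomp]; rfl)
  set a := U.support.max' hUne with ha
  set a' := U.support.min' hUne with ha'
  set b := V.support.max' hVne with hb
  set b' := V.support.min' hVne with hb'
  have h1 : a + b = 0 := by
    apply key a (U.support.max'_mem hUne) b (V.support.max'_mem hVne)
    intro i hi j hj hij
    have hia : i ≤ a := U.support.le_max' i hi
    have hjb : j ≤ b := V.support.le_max' j hj
    have hjb' : b ≤ j := by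
      have : a + b ≤ a + j := by rw [← hij]; exact add_le_add_left hia j
      exact le_of_add_le_add_left this
    have hj' : j = b := le_antisymm hjb hjb'
    subst hj'
    exact ⟨add_right_cancel hij, rfl⟩
  have h2 : a' + b' = 0 := by
    apply key a' (U.support.min'_mem hUne) b' (V.support.min'_mem hVne)
    intro i hi j hj hij
    have hia : a' ≤ i := U.support.min'_le i hi
    have hjb : b' ≤ j := V.support.min'_le j hj
    have hjb' : j ≤ b' := by
      have : a' + j ≤ a' + b' := by rw [← hij]; exact add_le_add_left hia j
      exact le_of_add_le_add_left this
    have hj' : j = b' := le_antisymm hjb' hjb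
    subst hj'
    exact ⟨add_right_cancel hij, rfl⟩
  have haa : a = a' := by
    have h3 : a' ≤ a := U.support.min'_le a (U.support.max'_mem hUne)
    have h4 : b' ≤ b := V.support.min'_le b (V.support.max'_mem hVne)
    refine le_antisymm ?_ h3
    have : a + b' ≤ a + b := add_le_add_right h4 a
    rw [h1, ← h2] at this
    exact le_of_add_le_add_right this
  refine ⟨a, ?_⟩
  have hrepr : ∑ i ∈ U.support, ((U i : 𝒜 i) : AddMonoidAlgebra k (Fin n →₀ ℤ)) = u :=
    DirectSum.sum_support_decompose 𝒜 u
  rw [← hrepr]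
  apply Finset.sum_induction _ (fun z => z ∈ 𝒜 a) (fun _ _ => add_mem) (zero_mem _)
  intro i hi
  have hia : i = a := le_antisymm (U.support.le_max' i hi) (haa ▸ U.support.min'_le i hi)
  rw [hia]
  exact (U a).2

theorem st_mono_homog (a : Fin n →₀ ℤ) (c : k) :
    ∃ d : G, AddMonoidAlgebra.single a c ∈ 𝒜 d := by
  rcases eq_or_ne c 0 with rfl | hc
  · exact ⟨0, by simp [Finsupp.single_zero, zero_mem]⟩
  · refine st_unit_homog 𝒜 (v := AddMonoidAlgebra.single (-a) c⁻¹) ?_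
    rw [AddMonoidAlgebra.single_mul_single, add_neg_cancel, mul_inv_cancel₀ hc, AddMonoidAlgebra.one_def]


variable (degg : AddMonoidAlgebra k (Fin n →₀ ℤ) → WithBot G)
variable (hdegfn : IsDegreeFunction degg)
variable (hdeg : ∀ x : AddMonoidAlgebra k (Fin n →₀ ℤ), x ≠ 0 → ∀ i : G,
      (degg x ≤ ↑i ↔ ∀ j : G, i < j → (DirectSum.decompose 𝒜 x j : AddMonoidAlgebra k (Fin n →₀ ℤ)) = 0))

include hdegfn hdeg in
theorem st_degg_of_mem {x : AddMonoidAlgebra k (Fin n →₀ ℤ)} {d : G}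
    (hx : x ∈ 𝒜 d) (h0 : x ≠ 0) : degg x = ↑d := by
  have hdec : DirectSum.decompose 𝒜 x = DirectSum.of _ d (⟨x, hx⟩ : 𝒜 d) :=
    DirectSum.decompose_coe 𝒜 (⟨x, hx⟩ : 𝒜 d)
  have hle : degg x ≤ ↑d := by
    rw [hdeg x h0 d]
    intro j hj
    rw [hdec, DirectSum.of_eq_of_ne _ _ _ (ne_of_gt hj)]
    rfl
  obtain ⟨c, hc⟩ : ∃ c : G, degg x = ↑c := by
    have hb : degg x ≠ ⊥ := fun h => h0 ((hdegfn.1 x).mp h)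
    obtain ⟨c, hc⟩ := WithBot.ne_bot_iff_exists.mp hb
    exact ⟨c, hc.symm⟩
  refine le_antisymm hle ?_
  rw [hc, WithBot.coe_le_coe]
  by_contra hdc
  push_neg at hdc
  have := (hdeg x h0 c).mp (le_of_eq hc) d hdc
  rw [hdec, DirectSum.of_eq_same] at this
  exact h0 this


include hdegfn hdeg in
theorem st_const_mem (c : k) : AddMonoidAlgebra.single (0 : Fin n →₀ ℤ) c ∈ 𝒜 0 := by
  rcases eq_or_ne c 0 with rfl | hc
  · simp [Finsupp.single_zero, zero_mem]
  rcases eq_or_ne c (-1) with rfl | hc1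
  · have h1 : AddMonoidAlgebra.single (0 : Fin n →₀ ℤ) (-1 : k) = -(1 : AddMonoidAlgebra k (Fin n →₀ ℤ)) := by
      rw [AddMonoidAlgebra.one_def, ← AddMonoidAlgebra.single_neg]
    rw [h1]
    exact neg_mem (SetLike.one_mem_graded 𝒜)
  obtain ⟨e, he⟩ := st_mono_homog 𝒜 0 c
  rcases eq_or_ne e 0 with rfl | he0
  · exact he
  exfalso
  have hsne : AddMonoidAlgebra.single (0 : Fin n →₀ ℤ) c ≠ 0 := by
    exact fun h => hc (AddMonoidAlgebra.single_eq_zero.mp h)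
  have hce : degg (AddMonoidAlgebra.single (0 : Fin n →₀ ℤ) c) = ↑e :=
    st_degg_of_mem 𝒜 degg hdegfn hdeg he hsne
  have h1c : (1 : k) + c ≠ 0 := fun h => hc1 (by rw [add_comm] at h; exact eq_neg_of_add_eq_zero_left h)
  have h1m : (1 : AddMonoidAlgebra k (Fin n →₀ ℤ)) ∈ 𝒜 0 := SetLike.one_mem_graded 𝒜
  have e1 : AddMonoidAlgebra.single (0 : Fin n →₀ ℤ) (1 + c)
      = ((⟨1, h1m⟩ : 𝒜 0) : AddMonoidAlgebra k (Fin n →₀ ℤ))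
        + ((⟨AddMonoidAlgebra.single 0 c, he⟩ : 𝒜 e) : AddMonoidAlgebra k (Fin n →₀ ℤ)) := by
    show AddMonoidAlgebra.single (0 : Fin n →₀ ℤ) (1 + c)
      = (1 : AddMonoidAlgebra k (Fin n →₀ ℤ)) + AddMonoidAlgebra.single 0 c
    rw [AddMonoidAlgebra.one_def, ← AddMonoidAlgebra.single_add]
  have hdec : DirectSum.decompose 𝒜 (AddMonoidAlgebra.single (0 : Fin n →₀ ℤ) (1 + c))
      = DirectSum.of _ (0 : G) (⟨1, h1m⟩ : 𝒜 0)
        + DirectSum.of _ e (⟨AddMonoidAlgebra.single 0 c, he⟩ : 𝒜 e) := by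
    rw [e1, DirectSum.decompose_add, DirectSum.decompose_coe, DirectSum.decompose_coe]
  obtain ⟨f, hf⟩ := st_mono_homog 𝒜 0 (1 + c)
  have hdec2 : DirectSum.decompose 𝒜 (AddMonoidAlgebra.single (0 : Fin n →₀ ℤ) (1 + c))
      = DirectSum.of _ f (⟨AddMonoidAlgebra.single 0 (1 + c), hf⟩ : 𝒜 f) := by
    exact DirectSum.decompose_coe 𝒜 ⟨_, hf⟩
  have hf0 : f = 0 := by
    by_contra hf0
    have h0comp : ((DirectSum.decompose 𝒜 (AddMonoidAlgebra.single (0 : Fin n →₀ ℤ) (1 + c)) 0 : 𝒜 0)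
        : AddMonoidAlgebra k (Fin n →₀ ℤ)) = 1 := by
      rw [hdec, DirectSum.add_apply, DirectSum.of_eq_same, DirectSum.of_eq_of_ne _ _ _ (Ne.symm he0)]
      show ((⟨1, h1m⟩ : 𝒜 0) + 0 : 𝒜 0).1 = 1
      simp
    rw [hdec2, DirectSum.of_eq_of_ne _ _ _ (Ne.symm hf0)] at h0comp
    exact (one_ne_zero : (1 : AddMonoidAlgebra k (Fin n →₀ ℤ)) ≠ 0) (by rw [← h0comp]; rfl)
  have hecomp : ((DirectSum.decompose 𝒜 (AddMonoidAlgebra.single (0 : Fin n →₀ ℤ) (1 + c)) e : 𝒜 e)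
      : AddMonoidAlgebra k (Fin n →₀ ℤ)) = AddMonoidAlgebra.single 0 c := by
    rw [hdec, DirectSum.add_apply, DirectSum.of_eq_same, DirectSum.of_eq_of_ne _ _ _ he0]
    show ((0 : 𝒜 e) + ⟨AddMonoidAlgebra.single 0 c, he⟩ : 𝒜 e).1 = AddMonoidAlgebra.single 0 c
    simp
  subst hf0
  rw [hdec2, DirectSum.of_eq_of_ne _ _ _ he0] at hecomp
  exact hc (AddMonoidAlgebra.single_eq_zero.mp (hecomp.symm.trans (ZeroMemClass.coe_zero _)))

include hdegfn hdeg in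
theorem st_degg_single_le (x : AddMonoidAlgebra k (Fin n →₀ ℤ)) (a : Fin n →₀ ℤ)
    (ha : a ∈ x.coeff.support) :
    degg (AddMonoidAlgebra.single a (x.coeff a)) ≤ degg x := by
  classical
  obtain ⟨d, hd⟩ := st_mono_homog 𝒜 a (x.coeff a)
  have hxa : x.coeff a ≠ 0 := Finsupp.mem_support_iff.mp ha
  have hsingle_ne : AddMonoidAlgebra.single a (x.coeff a) ≠ 0 :=
    fun h => hxa (AddMonoidAlgebra.single_eq_zero.mp h)
  rw [st_degg_of_mem 𝒜 degg hdegfn hdeg hd hsingle_ne]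
  have hx0 : x ≠ 0 := fun h => hxa (by rw [h]; rfl)
  by_contra hlt
  push_neg at hlt
  obtain ⟨c, hc⟩ : ∃ c : G, degg x = ↑c := by
    have hb : degg x ≠ ⊥ := fun h => hx0 ((hdegfn.1 x).mp h)
    obtain ⟨c, hc⟩ := WithBot.ne_bot_iff_exists.mp hb
    exact ⟨c, hc.symm⟩
  have hcd : c < d := by rw [hc] at hlt; exact_mod_cast hlt
  have hcomp0 := (hdeg x hx0 c).mp (le_of_eq hc) d hcd
  have hkey : ((DirectSum.decompose 𝒜 x d : 𝒜 d) : AddMonoidAlgebra k (Fin n →₀ ℤ)).coeff a = x.coeff a := by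
    have hrepr : x = ∑ a' ∈ x.coeff.support, AddMonoidAlgebra.single a' (x.coeff a') :=
      (AddMonoidAlgebra.sum_coeff_single x).symm
    conv_lhs => rw [hrepr]
    rw [DirectSum.decompose_sum, DFinsupp.finset_sum_apply, AddSubmonoidClass.coe_finset_sum,
      AddMonoidAlgebra.coeff_sum, Finset.sum_apply']
    rw [Finset.sum_eq_single a]
    · rw [show DirectSum.decompose 𝒜 (AddMonoidAlgebra.single a (x.coeff a))
          = DirectSum.of _ d (⟨_, hd⟩ : 𝒜 d) by exact DirectSum.decompose_coe 𝒜 ⟨_, hd⟩,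
        DirectSum.of_eq_same, AddMonoidAlgebra.coeff_single]
      exact Finsupp.single_eq_same
    · intro a' ha' hne
      obtain ⟨d', hd'⟩ := st_mono_homog 𝒜 a' (x.coeff a')
      rw [show DirectSum.decompose 𝒜 (AddMonoidAlgebra.single a' (x.coeff a'))
          = DirectSum.of _ d' (⟨_, hd'⟩ : 𝒜 d') by exact DirectSum.decompose_coe 𝒜 ⟨_, hd'⟩]
      rcases eq_or_ne d' d with rfl | hdd
      · rw [DirectSum.of_eq_same, AddMonoidAlgebra.coeff_single]
        exact Finsupp.single_eq_of_ne' hne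
      · rw [DirectSum.of_eq_of_ne _ _ _ (Ne.symm hdd)]
        rfl
    · intro h
      exact absurd ha h
  rw [hcomp0] at hkey
  exact hxa (by rw [← hkey]; rfl)


-- helper degree lemmas
include hdegfn hdeg in
theorem st_degg_one : degg (1 : AddMonoidAlgebra k (Fin n →₀ ℤ)) = 0 :=
  st_degg_of_mem 𝒜 degg hdegfn hdeg (SetLike.one_mem_graded 𝒜) one_ne_zero

include hdegfn hdeg in
theorem st_degg_smul (c : k) (hc : c ≠ 0) (z : AddMonoidAlgebra k (Fin n →₀ ℤ)) :
    degg (c • z) = degg z := by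
  have h1 : c • z = AddMonoidAlgebra.single (0 : Fin n →₀ ℤ) c * z := by
    rw [Algebra.smul_def]; rfl
  have h2 : degg (AddMonoidAlgebra.single (0 : Fin n →₀ ℤ) c) = (0 : G) :=
    st_degg_of_mem 𝒜 degg hdegfn hdeg (st_const_mem 𝒜 degg hdegfn hdeg c)
      (fun h => hc (AddMonoidAlgebra.single_eq_zero.mp h))
  rw [h1, hdegfn.2.1, h2]
  cases degg z with
  | bot => rfl
  | coe g => rw [← WithBot.coe_add, zero_add]

include hdegfn hdeg in
theorem st_degg_neg (z : AddMonoidAlgebra k (Fin n →₀ ℤ)) : degg (-z) = degg z := by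
  have : -z = (-1 : k) • z := by rw [neg_one_smul]
  rw [this, st_degg_smul 𝒜 degg hdegfn hdeg _ (by norm_num) z]

include hdegfn in
theorem st_degg_sum_le {ι : Type*} (s : Finset ι)
    (f : ι → AddMonoidAlgebra k (Fin n →₀ ℤ)) :
    degg (∑ i ∈ s, f i) ≤ s.sup fun i => degg (f i) := by
  classical
  induction s using Finset.cons_induction with
  | empty => simp [le_refl, (hdegfn.1 0).mpr rfl]
  | cons i s his ih =>
    rw [Finset.sum_cons, Finset.sup_cons]
    exact le_trans (hdegfn.2.2 _ _) (max_le_max (le_refl _) ih)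

end StAux

set_option synthInstance.maxHeartbeats 1000000
set_option maxHeartbeats 1000000

/-- The variable `Xᵢ` in the Laurent polynomial ring
`k[X₁^{±1},…,Xₙ^{±1}] = AddMonoidAlgebra k (Fin n →₀ ℤ)`. -/
noncomputable def LaurentX (k : Type*) [Field k] (n : ℕ) (i : Fin n) :
    AddMonoidAlgebra k (Fin n →₀ ℤ) :=
  AddMonoidAlgebra.single (Finsupp.single i 1) 1

open AddMonoidAlgebra in
theorem stmt16 {k G : Type*} [Field k] [CharZero k]
    [AddCommGroup G] [LinearOrder G] [IsOrderedAddMonoid G] [DecidableEq G] (n : ℕ)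
    -- a G-grading g of the Laurent polynomial ring L
    (𝒜 : G → AddSubgroup (AddMonoidAlgebra k (Fin n →₀ ℤ))) [GradedRing 𝒜]
    -- deg_g is the degree function determined by the grading
    (degg : AddMonoidAlgebra k (Fin n →₀ ℤ) → WithBot G)
    (hdegfn : IsDegreeFunction degg)
    (hdeg : ∀ x : AddMonoidAlgebra k (Fin n →₀ ℤ), x ≠ 0 → ∀ i : G,
      (degg x ≤ ↑i ↔ ∀ j : G, i < j → (DirectSum.decompose 𝒜 x j : AddMonoidAlgebra k (Fin n →₀ ℤ)) = 0))
    -- B is a ring with k[X₁,…,Xₙ] ⊆ B ⊆ L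
    (B : Subalgebra k (AddMonoidAlgebra k (Fin n →₀ ℤ)))
    (hpoly : Algebra.adjoin k (Set.range (LaurentX k n)) ≤ B)
    (hXB : ∀ i : Fin n, LaurentX k n i ∈ B) :
    -- the restriction of deg_g to B is tame over k:
    (∀ D : Derivation k ↥B ↥B,
      DegreeDefinedAt (fun b : ↥B => degg ↑b) ⇑D) ∧
    -- moreover, if each Xᵢ is g-homogeneous:
    ((∀ i : Fin n, ∃ d : G, LaurentX k n i ∈ 𝒜 d) →
      ∀ D : Derivation k ↥B ↥B,
        IsGreatest (degDeltaSet (fun b : ↥B => degg ↑b) ⇑D)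
          (Finset.univ.sup fun i : Fin n =>
            degDelta (fun b : ↥B => degg ↑b) ⇑D ⟨LaurentX k n i, hXB i⟩)) := by
  classical
  have main : ∀ D : Derivation k ↥B ↥B,
      IsGreatest (degDeltaSet (fun b : ↥B => degg ↑b) ⇑D)
        (Finset.univ.sup fun i : Fin n =>
          degDelta (fun b : ↥B => degg ↑b) ⇑D ⟨LaurentX k n i, hXB i⟩) := by
    intro D
    set M := Finset.univ.sup fun i : Fin n =>
      degDelta (fun b : ↥B => degg ↑b) ⇑D ⟨LaurentX k n i, hXB i⟩ with hMdef
    -- the boundedness predicate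
    set P : ↥B → Prop := fun b => degg ↑(D b) ≤ M + degg ↑b with hPdef
    have hcoe_ne : ∀ x : ↥B, x ≠ 0 → ((x : AddMonoidAlgebra k (Fin n →₀ ℤ)) ≠ 0) := by
      intro x hx h
      exact hx (Subtype.ext (by rw [h]; rfl))
    have hdegg_exists : ∀ z : AddMonoidAlgebra k (Fin n →₀ ℤ), z ≠ 0 → ∃ c : G, degg z = ↑c := by
      intro z hz
      have hb : degg z ≠ ⊥ := fun h => hz ((hdegfn.1 z).mp h)
      obtain ⟨c, hc⟩ := WithBot.ne_bot_iff_exists.mp hb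
      exact ⟨c, hc.symm⟩
    have hP1 : P 1 := by
      show degg ↑(D 1) ≤ M + degg ↑(1 : ↥B)
      rw [Derivation.map_one_eq_zero]
      have : ((0 : ↥B) : AddMonoidAlgebra k (Fin n →₀ ℤ)) = 0 := rfl
      rw [this, (hdegfn.1 0).mpr rfl]
      exact bot_le
    have hPmul : ∀ x y : ↥B, P x → P y → P (x * y) := by
      intro x y hx hy
      show degg ↑(D (x * y)) ≤ M + degg ↑(x * y)
      have hD : (↑(D (x * y)) : AddMonoidAlgebra k (Fin n →₀ ℤ))
          = ↑x * ↑(D y) + ↑y * ↑(D x) := by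
        rw [Derivation.leibniz, smul_eq_mul, smul_eq_mul]
        push_cast
        ring
      have hxy : degg (↑(x * y) : AddMonoidAlgebra k (Fin n →₀ ℤ))
          = degg (x : AddMonoidAlgebra k (Fin n →₀ ℤ)) + degg (y : AddMonoidAlgebra k (Fin n →₀ ℤ)) := by
        rw [show (↑(x * y) : AddMonoidAlgebra k (Fin n →₀ ℤ)) = ↑x * ↑y from rfl, hdegfn.2.1]
      rw [hD, hxy]
      refine le_trans (hdegfn.2.2 _ _) (max_le ?_ ?_)
      · rw [hdegfn.2.1]
        calc degg (x : AddMonoidAlgebra k (Fin n →₀ ℤ)) + degg ↑(D y)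
            ≤ degg (x : AddMonoidAlgebra k (Fin n →₀ ℤ)) + (M + degg ↑y) := add_le_add_right hy _
          _ = M + (degg (x : AddMonoidAlgebra k (Fin n →₀ ℤ)) + degg ↑y) := by
              rw [← add_assoc, add_comm (degg (x : AddMonoidAlgebra k (Fin n →₀ ℤ))) M, add_assoc]
      · rw [hdegfn.2.1]
        calc degg (y : AddMonoidAlgebra k (Fin n →₀ ℤ)) + degg ↑(D x)
            ≤ degg (y : AddMonoidAlgebra k (Fin n →₀ ℤ)) + (M + degg ↑x) := add_le_add_right hx _
          _ = M + (degg (x : AddMonoidAlgebra k (Fin n →₀ ℤ)) + degg ↑y) := by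
              rw [← add_assoc, add_comm (degg (y : AddMonoidAlgebra k (Fin n →₀ ℤ))) M, add_assoc,
                add_comm (degg (y : AddMonoidAlgebra k (Fin n →₀ ℤ)))]
    have hLX_ne : ∀ i : Fin n, LaurentX k n i ≠ 0 := by
      intro i h
      exact one_ne_zero (AddMonoidAlgebra.single_eq_zero.mp h)
    have hPX : ∀ i : Fin n, P ⟨LaurentX k n i, hXB i⟩ := by
      intro i
      have h1 : degDelta (fun b : ↥B => degg ↑b) ⇑D ⟨LaurentX k n i, hXB i⟩ ≤ M := by
        rw [hMdef]
        exact Finset.le_sup (f := fun j : Fin n =>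
          degDelta (fun b : ↥B => degg ↑b) ⇑D ⟨LaurentX k n j, hXB j⟩) (Finset.mem_univ i)
      obtain ⟨dx, hdx⟩ := hdegg_exists _ (hLX_ne i)
      show degg ↑(D ⟨LaurentX k n i, hXB i⟩) ≤ M + degg ↑(⟨LaurentX k n i, hXB i⟩ : ↥B)
      have h2 : (degg ↑(D ⟨LaurentX k n i, hXB i⟩)).map (fun a => a - dx) ≤ M := by
        have : degDelta (fun b : ↥B => degg ↑b) ⇑D ⟨LaurentX k n i, hXB i⟩
            = (degg ↑(D ⟨LaurentX k n i, hXB i⟩)).map (fun a => a - dx) := by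
          rw [degDelta]
          simp only []
          rw [show degg ↑(⟨LaurentX k n i, hXB i⟩ : ↥B) = (dx : WithBot G) from hdx,
            WithBot.unbotD_coe]
        rwa [this] at h1
      rw [show degg ↑(⟨LaurentX k n i, hXB i⟩ : ↥B) = (dx : WithBot G) from hdx]
      exact (st_map_sub_le_iff _ _ _).mp h2
    have hPpow : ∀ x : ↥B, P x → ∀ m : ℕ, P (x ^ m) := by
      intro x hx m
      induction m with
      | zero => rw [pow_zero]; exact hP1
      | succ m ih => rw [pow_succ]; exact hPmul _ _ ih hx
    have hPprod : ∀ f : Fin n → ↥B, (∀ i, P (f i)) → P (∏ i, f i) := by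
      intro f hf
      exact Finset.prod_induction f P hPmul hP1 (fun i _ => hf i)
    -- monomials
    set mono : (Fin n →₀ ℤ) → ↥B :=
      fun a => ∏ i, (⟨LaurentX k n i, hXB i⟩ : ↥B) ^ (a i).toNat with hmonodef
    have hmono : ∀ a : Fin n →₀ ℤ, 0 ≤ a →
        ((mono a : ↥B) : AddMonoidAlgebra k (Fin n →₀ ℤ)) = AddMonoidAlgebra.single a 1 := by
      intro a ha
      have hcoe : ((mono a : ↥B) : AddMonoidAlgebra k (Fin n →₀ ℤ))
          = ∏ i, (LaurentX k n i) ^ (a i).toNat := by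
        rw [hmonodef]
        push_cast
        rfl
      rw [hcoe]
      have : ∀ i : Fin n, (LaurentX k n i) ^ (a i).toNat
          = AddMonoidAlgebra.single (Finsupp.single i (a i)) (1 : k) := by
        intro i
        rw [LaurentX, AddMonoidAlgebra.single_pow, one_pow, Finsupp.smul_single,
          nsmul_eq_mul, mul_one, Int.toNat_of_nonneg (Finsupp.le_def.mp ha i)]
      rw [Finset.prod_congr rfl fun i _ => this i, AddMonoidAlgebra.prod_single,
        Finset.prod_const_one]
      congr 1
      exact Finsupp.univ_sum_single a
    have hmonoP : ∀ a : Fin n →₀ ℤ, P (mono a) :=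
      fun a => hPprod _ fun i => hPpow _ (hPX i) _
    -- the key bound
    have key : ∀ x : ↥B, degg ↑(D x) ≤ M + degg ↑x := by
      intro x
      rcases eq_or_ne x 0 with rfl | hx0
      · rw [map_zero]
        have : ((0 : ↥B) : AddMonoidAlgebra k (Fin n →₀ ℤ)) = 0 := rfl
        rw [this, (hdegfn.1 0).mpr rfl]
        exact bot_le
      have hxl : (x : AddMonoidAlgebra k (Fin n →₀ ℤ)) ≠ 0 := hcoe_ne x hx0
      set xl := (x : AddMonoidAlgebra k (Fin n →₀ ℤ)) with hxldef
      set T := xl.coeff.support with hTdef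
      set N : Fin n →₀ ℤ := ∑ a ∈ T, a.mapRange (fun z => max (-z) 0) (by simp) with hNdef
      have hNi : ∀ (a : Fin n →₀ ℤ), a ∈ T → ∀ i, max (-(a i)) 0 ≤ N i := by
        intro a ha i
        rw [hNdef]
        rw [Finset.sum_apply']
        refine Finset.single_le_sum (fun a' _ => ?_) ha |>.trans_eq' ?_
        · rw [Finsupp.mapRange_apply]; exact le_max_right _ _
        · rw [Finsupp.mapRange_apply]
      have hNnn : 0 ≤ N := by
        rw [Finsupp.le_def]
        intro i
        rw [hNdef, Finsupp.coe_zero, Pi.zero_apply, Finset.sum_apply']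
        exact Finset.sum_nonneg fun a _ => by rw [Finsupp.mapRange_apply]; exact le_max_right _ _
      have hNa : ∀ a ∈ T, 0 ≤ N + a := by
        intro a ha
        rw [Finsupp.le_def]
        intro i
        have h1 := hNi a ha i
        have : -(a i) ≤ N i := le_trans (le_max_left _ _) h1
        rw [Finsupp.coe_zero, Pi.zero_apply, Finsupp.add_apply]
        linarith
      set u : ↥B := mono N with hudef
      have hu : (u : AddMonoidAlgebra k (Fin n →₀ ℤ)) = AddMonoidAlgebra.single N 1 :=
        hmono N hNnn
      have hu_ne : (u : AddMonoidAlgebra k (Fin n →₀ ℤ)) ≠ 0 := by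
        rw [hu]; exact fun h => one_ne_zero (AddMonoidAlgebra.single_eq_zero.mp h)
      -- y = u * x decomposes as a sum of monomials
      have hy : u * x = ∑ a ∈ T, xl.coeff a • mono (N + a) := by
        apply Subtype.ext
        push_cast
        have hrhs : ∀ a ∈ T, xl.coeff a • ((mono (N + a) : ↥B) : AddMonoidAlgebra k (Fin n →₀ ℤ))
            = AddMonoidAlgebra.single (N + a) (xl.coeff a) := by
          intro a ha
          rw [hmono _ (hNa a ha), AddMonoidAlgebra.smul_single, smul_eq_mul, mul_one]
        rw [Finset.sum_congr rfl hrhs]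
        rw [hu]
        conv_lhs => rw [show (x : AddMonoidAlgebra k (Fin n →₀ ℤ)) = xl from rfl,
          ← AddMonoidAlgebra.sum_coeff_single xl]
        rw [Finsupp.mul_sum, Finsupp.sum]
        exact Finset.sum_congr rfl fun a ha => by
          rw [AddMonoidAlgebra.single_mul_single, one_mul]
      have hyl : ((u * x : ↥B) : AddMonoidAlgebra k (Fin n →₀ ℤ))
          = ∑ a ∈ T, AddMonoidAlgebra.single (N + a) (xl.coeff a) := by
        rw [hy]
        push_cast
        exact Finset.sum_congr rfl fun a ha => by
          rw [hmono _ (hNa a ha), AddMonoidAlgebra.smul_single, smul_eq_mul, mul_one]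
      have hcoeff : ∀ a ∈ T, ((u * x : ↥B) : AddMonoidAlgebra k (Fin n →₀ ℤ)).coeff (N + a) = xl.coeff a := by
        intro a ha
        rw [hyl, AddMonoidAlgebra.coeff_sum, Finset.sum_apply']
        rw [Finset.sum_eq_single a]
        · exact Finsupp.single_eq_same
        · intro a' ha' hne
          exact Finsupp.single_eq_of_ne' fun h => hne (add_left_cancel h)
        · intro h
          exact absurd ha h
      have hcoe_mul : ((u * x : ↥B) : AddMonoidAlgebra k (Fin n →₀ ℤ)) = ↑u * ↑x := rfl
      have hD1 : D (u * x) = ∑ a ∈ T, xl.coeff a • D (mono (N + a)) := by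
        rw [hy, map_sum]
        exact Finset.sum_congr rfl fun a _ => D.map_smul _ _
      have hDy_le : degg ↑(D (u * x)) ≤ M + degg ((u * x : ↥B) : AddMonoidAlgebra k (Fin n →₀ ℤ)) := by
        have hDsum : (↑(D (u * x)) : AddMonoidAlgebra k (Fin n →₀ ℤ))
            = ∑ a ∈ T, xl.coeff a • (↑(D (mono (N + a))) : AddMonoidAlgebra k (Fin n →₀ ℤ)) := by
          rw [hD1]
          push_cast
          rfl
        rw [hDsum]
        refine le_trans (st_degg_sum_le degg hdegfn T _) (Finset.sup_le ?_)
        intro a ha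
        have hxa : xl.coeff a ≠ 0 := Finsupp.mem_support_iff.mp ha
        rw [st_degg_smul 𝒜 degg hdegfn hdeg _ hxa]
        refine le_trans (hmonoP (N + a)) (add_le_add_right ?_ M)
        rw [hmono _ (hNa a ha)]
        have hmem : (N + a) ∈ ((u * x : ↥B) : AddMonoidAlgebra k (Fin n →₀ ℤ)).coeff.support := by
          rw [Finsupp.mem_support_iff, hcoeff a ha]
          exact hxa
        have hle := st_degg_single_le 𝒜 degg hdegfn hdeg
          ((u * x : ↥B) : AddMonoidAlgebra k (Fin n →₀ ℤ)) (N + a) hmem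
        rw [hcoeff a ha] at hle
        have heq : degg (AddMonoidAlgebra.single (N + a) (1 : k))
            = degg (AddMonoidAlgebra.single (N + a) (xl.coeff a)) := by
          rw [show AddMonoidAlgebra.single (N + a) (xl.coeff a)
              = xl.coeff a • AddMonoidAlgebra.single (N + a) (1 : k) by
            rw [AddMonoidAlgebra.smul_single, smul_eq_mul, mul_one],
            st_degg_smul 𝒜 degg hdegfn hdeg _ hxa]
        rw [heq]
        exact hle
      have hDleib : (↑u : AddMonoidAlgebra k (Fin n →₀ ℤ)) * ↑(D x)
          = ↑(D (u * x)) - ↑x * ↑(D u) := by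
        have h1 : (↑(D (u * x)) : AddMonoidAlgebra k (Fin n →₀ ℤ))
            = ↑u * ↑(D x) + ↑x * ↑(D u) := by
          rw [D.leibniz, smul_eq_mul, smul_eq_mul]
          push_cast
          ring
        rw [h1]
        ring
      have hfinal : degg ((↑u : AddMonoidAlgebra k (Fin n →₀ ℤ)) * ↑(D x))
          ≤ M + (degg (↑u : AddMonoidAlgebra k (Fin n →₀ ℤ)) + degg xl) := by
        rw [hDleib, sub_eq_add_neg]
        refine le_trans (hdegfn.2.2 _ _) (max_le ?_ ?_)
        · refine le_trans hDy_le ?_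
          rw [hcoe_mul, hdegfn.2.1]
        · rw [st_degg_neg 𝒜 degg hdegfn hdeg, hdegfn.2.1]
          have hPu : degg ↑(D u) ≤ M + degg (↑u : AddMonoidAlgebra k (Fin n →₀ ℤ)) := hmonoP N
          calc degg (↑x : AddMonoidAlgebra k (Fin n →₀ ℤ)) + degg ↑(D u)
              ≤ degg xl + (M + degg (↑u : AddMonoidAlgebra k (Fin n →₀ ℤ))) := add_le_add_right hPu _
            _ = M + (degg (↑u : AddMonoidAlgebra k (Fin n →₀ ℤ)) + degg xl) := by
                rw [← add_assoc, add_comm (degg xl) M, add_assoc,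
                  add_comm (degg xl) (degg (↑u : AddMonoidAlgebra k (Fin n →₀ ℤ)))]
      rw [hdegfn.2.1] at hfinal
      obtain ⟨dN, hdN⟩ := hdegg_exists _ hu_ne
      rw [hdN] at hfinal
      have h2 : (↑dN : WithBot G) + degg ↑(D x) ≤ ↑dN + (M + degg xl) := by
        refine le_trans hfinal (le_of_eq ?_)
        rw [← add_assoc, add_comm M (↑dN : WithBot G), add_assoc]
      exact (WithBot.add_le_add_iff_left (WithBot.coe_ne_bot)).mp h2
    constructor
    · by_cases hM : M = ⊥
      · refine ⟨1, ?_, ?_⟩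
        · intro h
          exact (one_ne_zero : (1 : AddMonoidAlgebra k (Fin n →₀ ℤ)) ≠ 0)
            (by simpa using Subtype.ext_iff.mp h)
        · show (degg ↑(D 1)).map (fun a => a - (degg ↑(1 : ↥B)).unbotD 0) = M
          rw [Derivation.map_one_eq_zero]
          rw [show ((0 : ↥B) : AddMonoidAlgebra k (Fin n →₀ ℤ)) = 0 from rfl,
            (hdegfn.1 0).mpr rfl, WithBot.map_bot, hM]
      · have hne : (Finset.univ : Finset (Fin n)).Nonempty := by
          rcases Finset.univ.eq_empty_or_nonempty (α := Fin n) with h | h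
          · exfalso
            apply hM
            rw [hMdef, h, Finset.sup_empty]
          · exact h
        obtain ⟨i, _, hi⟩ := Finset.exists_mem_eq_sup Finset.univ hne
          (fun j : Fin n => degDelta (fun b : ↥B => degg ↑b) ⇑D ⟨LaurentX k n j, hXB j⟩)
        refine ⟨⟨LaurentX k n i, hXB i⟩, ?_, ?_⟩
        · intro h
          exact hLX_ne i (by simpa using Subtype.ext_iff.mp h)
        · exact (hMdef.trans hi).symm
    · rintro m ⟨x, hx0, rfl⟩
      have hxl := hcoe_ne x hx0
      obtain ⟨dx, hdx⟩ := hdegg_exists _ hxl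
      have h1 := key x
      rw [hdx] at h1
      show (degg ↑(D x)).map (fun a => a - (degg ↑x).unbotD 0) ≤ M
      rw [hdx, WithBot.unbotD_coe]
      exact (st_map_sub_le_iff _ _ _).mpr h1
  exact ⟨fun D => ⟨_, main D⟩, fun _ D => main D⟩
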